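/- For the 4-qubit error-detecting code with stabilizers XXXX, ZIIZ, IZZI, for every qubit position i ∈ {1,2,3,4} there exist a logical X operator and a logical Z operator (elements of N(S)\S implementing the logical X and Z respectively on the codespace) that act as the identity on qubit i. -/

import Mathlib

open Matrix Complex

noncomputable section

/-- Single-qubit Pauli matrices. -/
def σI : Matrix (Fin 2) (Fin 2) ℂ := 1
def σX : Matrix (Fin 2) (Fin 2) ℂ := !![0, 1; 1, 0]
def σY : Matrix (Fin 2) (Fin 2) ℂ := !![0, -Complex.I; Complex.I, 0]
def σZ : Matrix (Fin 2) (Fin 2) ℂ := !![1, 0; 0, -1]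

/-- Tensor product of single-qubit matrices, one per qubit. -/
def tensorQ {ι : Type*} [Fintype ι] (W : ι → Matrix (Fin 2) (Fin 2) ℂ) :
    Matrix (ι → Fin 2) (ι → Fin 2) ℂ :=
  Matrix.of fun x y => ∏ i, W i (x i) (y i)

def IsPauliFactor (M : Matrix (Fin 2) (Fin 2) ℂ) : Prop :=
  M = σI ∨ M = σX ∨ M = σY ∨ M = σZ

def IsPhase (c : ℂ) : Prop := c = 1 ∨ c = -1 ∨ c = Complex.I ∨ c = -Complex.I

/-- Membership in the `n`-qubit Pauli group: a phase ±1, ±i times a tensor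
product of single-qubit Pauli matrices. -/
def InPauliGroup {ι : Type*} [Fintype ι] (A : Matrix (ι → Fin 2) (ι → Fin 2) ℂ) : Prop :=
  ∃ (c : ℂ) (W : ι → Matrix (Fin 2) (Fin 2) ℂ),
    IsPhase c ∧ (∀ i, IsPauliFactor (W i)) ∧ A = c • tensorQ W


/-- Computational basis vector `|x⟩`. -/
def ket {n : ℕ} (x : Fin n → Fin 2) : (Fin n → Fin 2) → ℂ :=
  fun y => if y = x then 1 else 0

/-- Encoding of `|0⟩` in the 4-qubit code: `(|0000⟩+|1111⟩)/√2`. -/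
def enc₀ : (Fin 4 → Fin 2) → ℂ :=
  ((Real.sqrt 2 : ℝ) : ℂ)⁻¹ • (ket ![0, 0, 0, 0] + ket ![1, 1, 1, 1])

/-- Encoding of `|1⟩` in the 4-qubit code: `(|1001⟩+|0110⟩)/√2`. -/
def enc₁ : (Fin 4 → Fin 2) → ℂ :=
  ((Real.sqrt 2 : ℝ) : ℂ)⁻¹ • (ket ![1, 0, 0, 1] + ket ![0, 1, 1, 0])

/-- The three stabilizer generators `XXXX, ZIIZ, IZZI`. -/
def gens4 : Fin 3 → Matrix (Fin 4 → Fin 2) (Fin 4 → Fin 2) ℂ :=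
  ![tensorQ ![σX, σX, σX, σX], tensorQ ![σZ, σI, σI, σZ], tensorQ ![σI, σZ, σZ, σI]]

/-- The stabilizer group `S` of the 4-qubit code: all products of the
generators `XXXX, ZIIZ, IZZI`. -/
def S4 : Set (Matrix (Fin 4 → Fin 2) (Fin 4 → Fin 2) ℂ) :=
  {A | ∃ L : List (Fin 3), A = (L.map gens4).prod}

-- auxiliary lemmas
lemma tensorQ_mul {ι : Type*} [Fintype ι] [DecidableEq ι] (W V : ι → Matrix (Fin 2) (Fin 2) ℂ) :
    tensorQ W * tensorQ V = tensorQ (fun i => W i * V i) := by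
  ext x y
  simp only [tensorQ, Matrix.mul_apply, Matrix.of_apply]
  rw [Finset.prod_univ_sum]
  simp [Finset.prod_mul_distrib]

lemma tensorQ_one {ι : Type*} [Fintype ι] [DecidableEq ι] :
    tensorQ (fun _ : ι => (1 : Matrix (Fin 2) (Fin 2) ℂ)) = 1 := by
  ext x y
  simp only [tensorQ, Matrix.of_apply, Matrix.one_apply]
  rw [Finset.prod_boole]
  simp [funext_iff]

lemma tensorQ_smul_pi (W : Fin 4 → Matrix (Fin 2) (Fin 2) ℂ) (c : Fin 4 → ℂ) :
    tensorQ (fun i => c i • W i) = (∏ i, c i) • tensorQ W := by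
  ext x y
  simp [tensorQ, Finset.prod_mul_distrib]

-- 2x2 facts
lemma XX : σX * σX = 1 := by
  ext i j; fin_cases i <;> fin_cases j <;> simp [σX, Matrix.mul_apply, Fin.sum_univ_two]
lemma ZZ : σZ * σZ = 1 := by
  ext i j; fin_cases i <;> fin_cases j <;> simp [σZ, Matrix.mul_apply, Fin.sum_univ_two]
lemma XZ : σX * σZ = (-1 : ℂ) • (σZ * σX) := by
  ext i j; fin_cases i <;> fin_cases j <;> simp [σX, σZ, Matrix.mul_apply, Fin.sum_univ_two]
lemma ZX : σZ * σX = (-1 : ℂ) • (σX * σZ) := by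
  ext i j; fin_cases i <;> fin_cases j <;> simp [σX, σZ, Matrix.mul_apply, Fin.sum_univ_two]

lemma tensorQ_comm4 (W V : Fin 4 → Matrix (Fin 2) (Fin 2) ℂ) (c : Fin 4 → ℂ)
    (hc : (∏ i, c i) = 1) (h : ∀ i, W i * V i = c i • (V i * W i)) :
    tensorQ W * tensorQ V = tensorQ V * tensorQ W := by
  rw [tensorQ_mul, tensorQ_mul]
  have h2 : (fun i => W i * V i) = fun i => c i • (V i * W i) := funext h
  rw [h2, tensorQ_smul_pi, hc, one_smul]

lemma g0 : gens4 0 = tensorQ ![σX, σX, σX, σX] := rfl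
lemma g1 : gens4 1 = tensorQ ![σZ, σI, σI, σZ] := rfl
lemma g2 : gens4 2 = tensorQ ![σI, σZ, σZ, σI] := rfl

lemma sq0 : gens4 0 * gens4 0 = 1 := by
  rw [g0, tensorQ_mul]
  rw [show (fun i => (![σX, σX, σX, σX]) i * (![σX, σX, σX, σX]) i)
      = fun _ : Fin 4 => (1 : Matrix (Fin 2) (Fin 2) ℂ) from funext fun i => by
    fin_cases i <;> simp [XX]]
  exact tensorQ_one
lemma sq1 : gens4 1 * gens4 1 = 1 := by
  rw [g1, tensorQ_mul]
  rw [show (fun i => (![σZ, σI, σI, σZ]) i * (![σZ, σI, σI, σZ]) i)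
      = fun _ : Fin 4 => (1 : Matrix (Fin 2) (Fin 2) ℂ) from funext fun i => by
    fin_cases i <;> simp [ZZ, σI]]
  exact tensorQ_one
lemma sq2 : gens4 2 * gens4 2 = 1 := by
  rw [g2, tensorQ_mul]
  rw [show (fun i => (![σI, σZ, σZ, σI]) i * (![σI, σZ, σZ, σI]) i)
      = fun _ : Fin 4 => (1 : Matrix (Fin 2) (Fin 2) ℂ) from funext fun i => by
    fin_cases i <;> simp [ZZ, σI]]
  exact tensorQ_one

lemma comm10 : gens4 1 * gens4 0 = gens4 0 * gens4 1 := by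
  rw [g0, g1]
  exact tensorQ_comm4 _ _ ![-1, 1, 1, -1] (by norm_num [Fin.prod_univ_four, Matrix.cons_val_two, Matrix.cons_val_three])
    (fun i => by fin_cases i <;> simp [ZX, σI])
lemma comm20 : gens4 2 * gens4 0 = gens4 0 * gens4 2 := by
  rw [g0, g2]
  exact tensorQ_comm4 _ _ ![1, -1, -1, 1] (by norm_num [Fin.prod_univ_four, Matrix.cons_val_two, Matrix.cons_val_three])
    (fun i => by fin_cases i <;> simp [ZX, σI])
lemma comm21 : gens4 2 * gens4 1 = gens4 1 * gens4 2 := by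
  rw [g1, g2]
  exact tensorQ_comm4 _ _ ![1, 1, 1, 1] (by norm_num [Fin.prod_univ_four, Matrix.cons_val_two, Matrix.cons_val_three])
    (fun i => by fin_cases i <;> simp [σI])


def M4 (a b c : Bool) : Matrix (Fin 4 → Fin 2) (Fin 4 → Fin 2) ℂ :=
  (cond a (gens4 0) 1) * (cond b (gens4 1) 1) * (cond c (gens4 2) 1)

lemma mem_S4_class {A : Matrix (Fin 4 → Fin 2) (Fin 4 → Fin 2) ℂ} (hA : A ∈ S4) :
    ∃ a b c, A = M4 a b c := by
  obtain ⟨L, rfl⟩ := hA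
  induction L with
  | nil => exact ⟨false, false, false, by simp [M4]⟩
  | cons j L ih =>
    obtain ⟨a, b, c, h⟩ := ih
    simp only [List.map_cons, List.prod_cons, h]
    have hA0 : gens4 0 * cond a (gens4 0) 1 = cond (!a) (gens4 0) 1 := by
      rcases a <;> simp [sq0]
    have hB1 : gens4 1 * cond b (gens4 1) 1 = cond (!b) (gens4 1) 1 := by
      rcases b <;> simp [sq1]
    have hC2 : gens4 2 * cond c (gens4 2) 1 = cond (!c) (gens4 2) 1 := by
      rcases c <;> simp [sq2]
    have hA1 : gens4 1 * cond a (gens4 0) 1 = cond a (gens4 0) 1 * gens4 1 := by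
      rcases a <;> simp [comm10]
    have hA2 : gens4 2 * cond a (gens4 0) 1 = cond a (gens4 0) 1 * gens4 2 := by
      rcases a <;> simp [comm20]
    have hB2 : gens4 2 * cond b (gens4 1) 1 = cond b (gens4 1) 1 * gens4 2 := by
      rcases b <;> simp [comm21]
    fin_cases j
    · refine ⟨!a, b, c, ?_⟩
      show gens4 0 * M4 a b c = M4 (!a) b c
      rw [M4, ← mul_assoc, ← mul_assoc, hA0, M4]
    · refine ⟨a, !b, c, ?_⟩
      show gens4 1 * M4 a b c = M4 a (!b) c
      rw [M4, ← mul_assoc, ← mul_assoc, hA1, mul_assoc _ (gens4 1), hB1, M4]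
    · refine ⟨a, b, !c, ?_⟩
      show gens4 2 * M4 a b c = M4 a b (!c)
      rw [M4, ← mul_assoc, ← mul_assoc, hA2, mul_assoc _ (gens4 2), hB2,
        ← mul_assoc, mul_assoc _ (gens4 2), hC2, M4]

def LXa : Fin 4 → Matrix (Fin 2) (Fin 2) ℂ := ![σX, σI, σI, σX]
def LXb : Fin 4 → Matrix (Fin 2) (Fin 2) ℂ := ![σI, σX, σX, σI]
def LZa : Fin 4 → Matrix (Fin 2) (Fin 2) ℂ := ![σZ, σZ, σI, σI]
def LZb : Fin 4 → Matrix (Fin 2) (Fin 2) ℂ := ![σI, σI, σZ, σZ]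

lemma cond_tensor (t : Bool) (f : Fin 4 → Matrix (Fin 2) (Fin 2) ℂ) :
    (cond t (tensorQ f) 1) = tensorQ (cond t f (fun _ => 1)) := by
  cases t
  · exact tensorQ_one.symm
  · rfl

lemma M4_eq (a b c : Bool) : M4 a b c =
    tensorQ (fun i => (cond a ![σX,σX,σX,σX] fun _ => 1) i * (cond b ![σZ,σI,σI,σZ] fun _ => 1) i
      * (cond c ![σI,σZ,σZ,σI] fun _ => 1) i) := by
  rw [M4, g0, g1, g2, cond_tensor, cond_tensor, cond_tensor, tensorQ_mul, tensorQ_mul]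

lemma not_in_S4_of (W : Fin 4 → Matrix (Fin 2) (Fin 2) ℂ) (x₀ y₀ : Fin 4 → Fin 2)
    (hval : ∀ a b c : Bool, tensorQ W x₀ y₀ ≠ M4 a b c x₀ y₀) : tensorQ W ∉ S4 := by
  intro hmem
  obtain ⟨a, b, c, he⟩ := mem_S4_class hmem
  exact hval a b c (by rw [he])

lemma LXa_not : tensorQ LXa ∉ S4 := by
  refine not_in_S4_of _ ![1,0,0,1] ![0,0,0,0] (fun a b c => ?_)
  rw [M4_eq]
  rcases a <;> rcases b <;> rcases c <;>
    simp [tensorQ, LXa, Fin.prod_univ_four, σX, σZ, σI, Matrix.mul_apply, Fin.sum_univ_two,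
      Matrix.one_apply, funext_iff, Fin.forall_fin_succ]

lemma LXb_not : tensorQ LXb ∉ S4 := by
  refine not_in_S4_of _ ![0,1,1,0] ![0,0,0,0] (fun a b c => ?_)
  rw [M4_eq]
  rcases a <;> rcases b <;> rcases c <;>
    simp [tensorQ, LXb, Fin.prod_univ_four, σX, σZ, σI, Matrix.mul_apply, Fin.sum_univ_two,
      Matrix.one_apply, funext_iff, Fin.forall_fin_succ]

lemma LZa_not : tensorQ LZa ∉ S4 := by
  refine not_in_S4_of _ ![1,0,0,1] ![1,0,0,1] (fun a b c => ?_)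
  rw [M4_eq]
  rcases a <;> rcases b <;> rcases c <;>
    norm_num [tensorQ, LZa, Fin.prod_univ_four, Matrix.cons_val_two, Matrix.cons_val_three, σX, σZ, σI, Matrix.mul_apply, Fin.sum_univ_two,
      Matrix.one_apply, funext_iff, Fin.forall_fin_succ]

lemma LZb_not : tensorQ LZb ∉ S4 := by
  refine not_in_S4_of _ ![1,0,0,1] ![1,0,0,1] (fun a b c => ?_)
  rw [M4_eq]
  rcases a <;> rcases b <;> rcases c <;>
    norm_num [tensorQ, LZb, Fin.prod_univ_four, Matrix.cons_val_two, Matrix.cons_val_three, σX, σZ, σI, Matrix.mul_apply, Fin.sum_univ_two,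
      Matrix.one_apply, funext_iff, Fin.forall_fin_succ]

-- commutation of logical ops with generators
lemma LXa_comm (j : Fin 3) : tensorQ LXa * gens4 j = gens4 j * tensorQ LXa := by
  fin_cases j
  · show tensorQ LXa * gens4 0 = gens4 0 * tensorQ LXa
    rw [g0]
    exact tensorQ_comm4 _ _ (fun _ => 1) (by simp)
      (fun i => by fin_cases i <;> simp [LXa, σI])
  · show tensorQ LXa * gens4 1 = gens4 1 * tensorQ LXa
    rw [g1]
    exact tensorQ_comm4 _ _ ![-1, 1, 1, -1] (by norm_num [Fin.prod_univ_four, Matrix.cons_val_two, Matrix.cons_val_three])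
      (fun i => by fin_cases i <;> simp [LXa, σI, XZ])
  · show tensorQ LXa * gens4 2 = gens4 2 * tensorQ LXa
    rw [g2]
    exact tensorQ_comm4 _ _ (fun _ => 1) (by simp)
      (fun i => by fin_cases i <;> simp [LXa, σI])

lemma LXb_comm (j : Fin 3) : tensorQ LXb * gens4 j = gens4 j * tensorQ LXb := by
  fin_cases j
  · show tensorQ LXb * gens4 0 = gens4 0 * tensorQ LXb
    rw [g0]
    exact tensorQ_comm4 _ _ (fun _ => 1) (by simp)
      (fun i => by fin_cases i <;> simp [LXb, σI])
  · show tensorQ LXb * gens4 1 = gens4 1 * tensorQ LXb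
    rw [g1]
    exact tensorQ_comm4 _ _ (fun _ => 1) (by simp)
      (fun i => by fin_cases i <;> simp [LXb, σI])
  · show tensorQ LXb * gens4 2 = gens4 2 * tensorQ LXb
    rw [g2]
    exact tensorQ_comm4 _ _ ![1, -1, -1, 1] (by norm_num [Fin.prod_univ_four, Matrix.cons_val_two, Matrix.cons_val_three])
      (fun i => by fin_cases i <;> simp [LXb, σI, XZ])

lemma LZa_comm (j : Fin 3) : tensorQ LZa * gens4 j = gens4 j * tensorQ LZa := by
  fin_cases j
  · show tensorQ LZa * gens4 0 = gens4 0 * tensorQ LZa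
    rw [g0]
    exact tensorQ_comm4 _ _ ![-1, -1, 1, 1] (by norm_num [Fin.prod_univ_four, Matrix.cons_val_two, Matrix.cons_val_three])
      (fun i => by fin_cases i <;> simp [LZa, σI, ZX])
  · show tensorQ LZa * gens4 1 = gens4 1 * tensorQ LZa
    rw [g1]
    exact tensorQ_comm4 _ _ (fun _ => 1) (by simp)
      (fun i => by fin_cases i <;> simp [LZa, σI])
  · show tensorQ LZa * gens4 2 = gens4 2 * tensorQ LZa
    rw [g2]
    exact tensorQ_comm4 _ _ (fun _ => 1) (by simp)
      (fun i => by fin_cases i <;> simp [LZa, σI])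

lemma LZb_comm (j : Fin 3) : tensorQ LZb * gens4 j = gens4 j * tensorQ LZb := by
  fin_cases j
  · show tensorQ LZb * gens4 0 = gens4 0 * tensorQ LZb
    rw [g0]
    exact tensorQ_comm4 _ _ ![1, 1, -1, -1] (by norm_num [Fin.prod_univ_four, Matrix.cons_val_two, Matrix.cons_val_three])
      (fun i => by fin_cases i <;> simp [LZb, σI, ZX])
  · show tensorQ LZb * gens4 1 = gens4 1 * tensorQ LZb
    rw [g1]
    exact tensorQ_comm4 _ _ (fun _ => 1) (by simp)
      (fun i => by fin_cases i <;> simp [LZb, σI])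
  · show tensorQ LZb * gens4 2 = gens4 2 * tensorQ LZb
    rw [g2]
    exact tensorQ_comm4 _ _ (fun _ => 1) (by simp)
      (fun i => by fin_cases i <;> simp [LZb, σI])

-- column machinery
lemma col_eq (W : Fin 4 → Matrix (Fin 2) (Fin 2) ℂ) (a : Fin 4 → Fin 2)
    (v : (Fin 4 → Fin 2) → ℂ)
    (h : ∀ x0 x1 x2 x3 : Fin 2, tensorQ W ![x0,x1,x2,x3] a = v ![x0,x1,x2,x3]) :
    (fun x => tensorQ W x a) = v := by
  funext x
  have h' := h (x 0) (x 1) (x 2) (x 3)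
  have hx : (![x 0, x 1, x 2, x 3] : Fin 4 → Fin 2) = x := by
    funext i; fin_cases i <;> rfl
  rwa [hx] at h'

lemma mulVec_ket (A : Matrix (Fin 4 → Fin 2) (Fin 4 → Fin 2) ℂ) (a : Fin 4 → Fin 2) :
    A.mulVec (ket a) = fun x => A x a := by
  funext x
  simp [Matrix.mulVec, dotProduct, ket]

lemma colXa0 : (fun x => tensorQ LXa x ![0,0,0,0]) = ket ![1,0,0,1] := by
  refine col_eq _ _ _ (fun x0 x1 x2 x3 => ?_)
  fin_cases x0 <;> fin_cases x1 <;> fin_cases x2 <;> fin_cases x3 <;>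
    norm_num [tensorQ, ket, LXa, σX, σI, Fin.prod_univ_four, Matrix.cons_val_two, Matrix.cons_val_three, Matrix.one_apply,
      funext_iff, Fin.forall_fin_succ]

lemma colXa1 : (fun x => tensorQ LXa x ![1,1,1,1]) = ket ![0,1,1,0] := by
  refine col_eq _ _ _ (fun x0 x1 x2 x3 => ?_)
  fin_cases x0 <;> fin_cases x1 <;> fin_cases x2 <;> fin_cases x3 <;>
    norm_num [tensorQ, ket, LXa, σX, σZ, σI, Fin.prod_univ_four, Matrix.cons_val_two, Matrix.cons_val_three, Matrix.one_apply,
      funext_iff, Fin.forall_fin_succ]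

lemma colXa2 : (fun x => tensorQ LXa x ![1,0,0,1]) = ket ![0,0,0,0] := by
  refine col_eq _ _ _ (fun x0 x1 x2 x3 => ?_)
  fin_cases x0 <;> fin_cases x1 <;> fin_cases x2 <;> fin_cases x3 <;>
    norm_num [tensorQ, ket, LXa, σX, σZ, σI, Fin.prod_univ_four, Matrix.cons_val_two, Matrix.cons_val_three, Matrix.one_apply,
      funext_iff, Fin.forall_fin_succ]

lemma colXa3 : (fun x => tensorQ LXa x ![0,1,1,0]) = ket ![1,1,1,1] := by
  refine col_eq _ _ _ (fun x0 x1 x2 x3 => ?_)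
  fin_cases x0 <;> fin_cases x1 <;> fin_cases x2 <;> fin_cases x3 <;>
    norm_num [tensorQ, ket, LXa, σX, σZ, σI, Fin.prod_univ_four, Matrix.cons_val_two, Matrix.cons_val_three, Matrix.one_apply,
      funext_iff, Fin.forall_fin_succ]

lemma colXb0 : (fun x => tensorQ LXb x ![0,0,0,0]) = ket ![0,1,1,0] := by
  refine col_eq _ _ _ (fun x0 x1 x2 x3 => ?_)
  fin_cases x0 <;> fin_cases x1 <;> fin_cases x2 <;> fin_cases x3 <;>
    norm_num [tensorQ, ket, LXb, σX, σZ, σI, Fin.prod_univ_four, Matrix.cons_val_two, Matrix.cons_val_three, Matrix.one_apply,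
      funext_iff, Fin.forall_fin_succ]

lemma colXb1 : (fun x => tensorQ LXb x ![1,1,1,1]) = ket ![1,0,0,1] := by
  refine col_eq _ _ _ (fun x0 x1 x2 x3 => ?_)
  fin_cases x0 <;> fin_cases x1 <;> fin_cases x2 <;> fin_cases x3 <;>
    norm_num [tensorQ, ket, LXb, σX, σZ, σI, Fin.prod_univ_four, Matrix.cons_val_two, Matrix.cons_val_three, Matrix.one_apply,
      funext_iff, Fin.forall_fin_succ]

lemma colXb2 : (fun x => tensorQ LXb x ![1,0,0,1]) = ket ![1,1,1,1] := by
  refine col_eq _ _ _ (fun x0 x1 x2 x3 => ?_)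
  fin_cases x0 <;> fin_cases x1 <;> fin_cases x2 <;> fin_cases x3 <;>
    norm_num [tensorQ, ket, LXb, σX, σZ, σI, Fin.prod_univ_four, Matrix.cons_val_two, Matrix.cons_val_three, Matrix.one_apply,
      funext_iff, Fin.forall_fin_succ]

lemma colXb3 : (fun x => tensorQ LXb x ![0,1,1,0]) = ket ![0,0,0,0] := by
  refine col_eq _ _ _ (fun x0 x1 x2 x3 => ?_)
  fin_cases x0 <;> fin_cases x1 <;> fin_cases x2 <;> fin_cases x3 <;>
    norm_num [tensorQ, ket, LXb, σX, σZ, σI, Fin.prod_univ_four, Matrix.cons_val_two, Matrix.cons_val_three, Matrix.one_apply,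
      funext_iff, Fin.forall_fin_succ]

lemma colZa0 : (fun x => tensorQ LZa x ![0,0,0,0]) = ket ![0,0,0,0] := by
  refine col_eq _ _ _ (fun x0 x1 x2 x3 => ?_)
  fin_cases x0 <;> fin_cases x1 <;> fin_cases x2 <;> fin_cases x3 <;>
    norm_num [tensorQ, ket, LZa, σX, σZ, σI, Fin.prod_univ_four, Matrix.cons_val_two, Matrix.cons_val_three, Matrix.one_apply,
      funext_iff, Fin.forall_fin_succ]

lemma colZa1 : (fun x => tensorQ LZa x ![1,1,1,1]) = ket ![1,1,1,1] := by
  refine col_eq _ _ _ (fun x0 x1 x2 x3 => ?_)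
  fin_cases x0 <;> fin_cases x1 <;> fin_cases x2 <;> fin_cases x3 <;>
    norm_num [tensorQ, ket, LZa, σX, σZ, σI, Fin.prod_univ_four, Matrix.cons_val_two, Matrix.cons_val_three, Matrix.one_apply,
      funext_iff, Fin.forall_fin_succ]

lemma colZa2 : (fun x => tensorQ LZa x ![1,0,0,1]) = -ket ![1,0,0,1] := by
  refine col_eq _ _ _ (fun x0 x1 x2 x3 => ?_)
  fin_cases x0 <;> fin_cases x1 <;> fin_cases x2 <;> fin_cases x3 <;>
    norm_num [tensorQ, ket, LZa, σX, σZ, σI, Fin.prod_univ_four, Matrix.cons_val_two, Matrix.cons_val_three, Matrix.one_apply,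
      funext_iff, Fin.forall_fin_succ]

lemma colZa3 : (fun x => tensorQ LZa x ![0,1,1,0]) = -ket ![0,1,1,0] := by
  refine col_eq _ _ _ (fun x0 x1 x2 x3 => ?_)
  fin_cases x0 <;> fin_cases x1 <;> fin_cases x2 <;> fin_cases x3 <;>
    norm_num [tensorQ, ket, LZa, σX, σZ, σI, Fin.prod_univ_four, Matrix.cons_val_two, Matrix.cons_val_three, Matrix.one_apply,
      funext_iff, Fin.forall_fin_succ]

lemma colZb0 : (fun x => tensorQ LZb x ![0,0,0,0]) = ket ![0,0,0,0] := by
  refine col_eq _ _ _ (fun x0 x1 x2 x3 => ?_)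
  fin_cases x0 <;> fin_cases x1 <;> fin_cases x2 <;> fin_cases x3 <;>
    norm_num [tensorQ, ket, LZb, σX, σZ, σI, Fin.prod_univ_four, Matrix.cons_val_two, Matrix.cons_val_three, Matrix.one_apply,
      funext_iff, Fin.forall_fin_succ]

lemma colZb1 : (fun x => tensorQ LZb x ![1,1,1,1]) = ket ![1,1,1,1] := by
  refine col_eq _ _ _ (fun x0 x1 x2 x3 => ?_)
  fin_cases x0 <;> fin_cases x1 <;> fin_cases x2 <;> fin_cases x3 <;>
    norm_num [tensorQ, ket, LZb, σX, σZ, σI, Fin.prod_univ_four, Matrix.cons_val_two, Matrix.cons_val_three, Matrix.one_apply,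
      funext_iff, Fin.forall_fin_succ]

lemma colZb2 : (fun x => tensorQ LZb x ![1,0,0,1]) = -ket ![1,0,0,1] := by
  refine col_eq _ _ _ (fun x0 x1 x2 x3 => ?_)
  fin_cases x0 <;> fin_cases x1 <;> fin_cases x2 <;> fin_cases x3 <;>
    norm_num [tensorQ, ket, LZb, σX, σZ, σI, Fin.prod_univ_four, Matrix.cons_val_two, Matrix.cons_val_three, Matrix.one_apply,
      funext_iff, Fin.forall_fin_succ]

lemma colZb3 : (fun x => tensorQ LZb x ![0,1,1,0]) = -ket ![0,1,1,0] := by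
  refine col_eq _ _ _ (fun x0 x1 x2 x3 => ?_)
  fin_cases x0 <;> fin_cases x1 <;> fin_cases x2 <;> fin_cases x3 <;>
    norm_num [tensorQ, ket, LZb, σX, σZ, σI, Fin.prod_univ_four, Matrix.cons_val_two, Matrix.cons_val_three, Matrix.one_apply,
      funext_iff, Fin.forall_fin_succ]


lemma LXa_e0 : (tensorQ LXa).mulVec enc₀ = enc₁ := by
  rw [enc₀, enc₁, Matrix.mulVec_smul, Matrix.mulVec_add, mulVec_ket, mulVec_ket, colXa0, colXa1]
lemma LXa_e1 : (tensorQ LXa).mulVec enc₁ = enc₀ := by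
  rw [enc₀, enc₁, Matrix.mulVec_smul, Matrix.mulVec_add, mulVec_ket, mulVec_ket, colXa2, colXa3]
lemma LXb_e0 : (tensorQ LXb).mulVec enc₀ = enc₁ := by
  rw [enc₀, enc₁, Matrix.mulVec_smul, Matrix.mulVec_add, mulVec_ket, mulVec_ket, colXb0, colXb1,
    add_comm]
lemma LXb_e1 : (tensorQ LXb).mulVec enc₁ = enc₀ := by
  rw [enc₀, enc₁, Matrix.mulVec_smul, Matrix.mulVec_add, mulVec_ket, mulVec_ket, colXb2, colXb3,
    add_comm]
lemma LZa_e0 : (tensorQ LZa).mulVec enc₀ = enc₀ := by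
  rw [enc₀, Matrix.mulVec_smul, Matrix.mulVec_add, mulVec_ket, mulVec_ket, colZa0, colZa1]
lemma LZa_e1 : (tensorQ LZa).mulVec enc₁ = -enc₁ := by
  rw [enc₁, Matrix.mulVec_smul, Matrix.mulVec_add, mulVec_ket, mulVec_ket, colZa2, colZa3,
    ← neg_add, smul_neg]
lemma LZb_e0 : (tensorQ LZb).mulVec enc₀ = enc₀ := by
  rw [enc₀, Matrix.mulVec_smul, Matrix.mulVec_add, mulVec_ket, mulVec_ket, colZb0, colZb1]
lemma LZb_e1 : (tensorQ LZb).mulVec enc₁ = -enc₁ := by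
  rw [enc₁, Matrix.mulVec_smul, Matrix.mulVec_add, mulVec_ket, mulVec_ket, colZb2, colZb3,
    ← neg_add, smul_neg]


lemma LXa_pauli : ∀ j, IsPauliFactor (LXa j) := fun j => by
  fin_cases j <;> simp [LXa, IsPauliFactor]
lemma LXb_pauli : ∀ j, IsPauliFactor (LXb j) := fun j => by
  fin_cases j <;> simp [LXb, IsPauliFactor]
lemma LZa_pauli : ∀ j, IsPauliFactor (LZa j) := fun j => by
  fin_cases j <;> simp [LZa, IsPauliFactor]
lemma LZb_pauli : ∀ j, IsPauliFactor (LZb j) := fun j => by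
  fin_cases j <;> simp [LZb, IsPauliFactor]

/-- for every qubit position `i` of the 4-qubit code there are a
logical `X` operator and a logical `Z` operator — Pauli tensor products lying in
`N(S) \ S` which implement the logical `X` (resp. `Z`) on the codespace — whose
`i`-th tensor factor is the identity. -/
theorem fourQubitCode_logical_ops_trivial_on_each_qubit :
    ∀ i : Fin 4,
      (∃ W : Fin 4 → Matrix (Fin 2) (Fin 2) ℂ,
        (∀ j, IsPauliFactor (W j)) ∧ W i = σI ∧
        (∀ j : Fin 3, tensorQ W * gens4 j = gens4 j * tensorQ W) ∧
        tensorQ W ∉ S4 ∧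
        (tensorQ W).mulVec enc₀ = enc₁ ∧ (tensorQ W).mulVec enc₁ = enc₀) ∧
      (∃ W : Fin 4 → Matrix (Fin 2) (Fin 2) ℂ,
        (∀ j, IsPauliFactor (W j)) ∧ W i = σI ∧
        (∀ j : Fin 3, tensorQ W * gens4 j = gens4 j * tensorQ W) ∧
        tensorQ W ∉ S4 ∧
        (tensorQ W).mulVec enc₀ = enc₀ ∧ (tensorQ W).mulVec enc₁ = -enc₁) := by
  intro i
  fin_cases i
  · exact ⟨⟨LXb, LXb_pauli, rfl, LXb_comm, LXb_not, LXb_e0, LXb_e1⟩,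
      ⟨LZb, LZb_pauli, rfl, LZb_comm, LZb_not, LZb_e0, LZb_e1⟩⟩
  · exact ⟨⟨LXa, LXa_pauli, rfl, LXa_comm, LXa_not, LXa_e0, LXa_e1⟩,
      ⟨LZb, LZb_pauli, rfl, LZb_comm, LZb_not, LZb_e0, LZb_e1⟩⟩
  · exact ⟨⟨LXa, LXa_pauli, rfl, LXa_comm, LXa_not, LXa_e0, LXa_e1⟩,
      ⟨LZa, LZa_pauli, rfl, LZa_comm, LZa_not, LZa_e0, LZa_e1⟩⟩
  · exact ⟨⟨LXb, LXb_pauli, rfl, LXb_comm, LXb_not, LXb_e0, LXb_e1⟩,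
      ⟨LZa, LZa_pauli, rfl, LZa_comm, LZa_not, LZa_e0, LZa_e1⟩⟩
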